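/- Cross-correlation of chirps on distinct finite-slope lines: for a ≠ a' in ℤ_N and any b,b' ∈ ℤ_N, |A(C_{L_{a,b}}, C_{L_{a',b'}})[v]| = 1/√N for every v ∈ ℤ_N × ℤ_N. -/

import Mathlib

open Finset

/-- `e(t) = exp(2πit/N)` on `ℤ/N`. -/
noncomputable def eN (N : ℕ) [NeZero N] (t : ZMod N) : ℂ :=
  Complex.exp (2 * Real.pi * Complex.I * (t.val : ℂ) / N)

/-- Heisenberg operator `π(τ,ω)`. -/
noncomputable def heis (N : ℕ) [NeZero N] (τ ω : ZMod N) (f : ZMod N → ℂ) : ZMod N → ℂ :=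
  fun n => eN N (-(2⁻¹ * τ * ω)) * eN N (ω * n) * f (n - τ)

/-- Standard inner product on sequences. -/
noncomputable def inn (N : ℕ) [NeZero N] (f g : ZMod N → ℂ) : ℂ :=
  ∑ n : ZMod N, f n * (starRingEnd ℂ) (g n)

/-- Ambiguity function `A(f,g)[v] = ⟨π(v)f, g⟩`. -/
noncomputable def amb (N : ℕ) [NeZero N] (f g : ZMod N → ℂ) (v : ZMod N × ZMod N) : ℂ :=
  inn N (heis N v.1 v.2 f) g

/-- Chirp sequence `C_{L_{a,b}}[n] = e(2⁻¹ a n² − b n)/√N`. -/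
noncomputable def chirp (N : ℕ) [NeZero N] (a b : ZMod N) : ZMod N → ℂ :=
  fun n => eN N (2⁻¹ * a * n ^ 2 - b * n) / (Real.sqrt N : ℂ)

/-- Dirac delta sequence supported at `b`. -/
def deltaSeq (N : ℕ) (b : ZMod N) : ZMod N → ℂ :=
  fun n => if n = b then 1 else 0

/-- Channel operator `H(S)[n] = Σ_k α_k e(ω_k n) S[n−τ_k]`. -/
noncomputable def chanOp (N : ℕ) [NeZero N] (r : ℕ) (α : Fin r → ℂ)
    (tw : Fin r → ZMod N × ZMod N) (S : ZMod N → ℂ) : ZMod N → ℂ :=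
  fun n => ∑ k : Fin r, α k * eN N ((tw k).2 * n) * S (n - (tw k).1)

section helpers
variable (N : ℕ) [NeZero N]

lemma eN_eq_pow (t : ZMod N) :
    eN N t = Complex.exp (2 * Real.pi * Complex.I / N) ^ t.val := by
  rw [← Complex.exp_nat_mul, eN]
  congr 1
  ring

lemma zeta_pow_N : Complex.exp (2 * Real.pi * Complex.I / N) ^ N = 1 := by
  rw [← Complex.exp_nat_mul]
  have hN : (N : ℂ) ≠ 0 := Nat.cast_ne_zero.2 (NeZero.ne N)
  rw [show (N : ℂ) * (2 * Real.pi * Complex.I / N) = 2 * Real.pi * Complex.I by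
    field_simp]
  exact Complex.exp_two_pi_mul_I

lemma eN_add (s t : ZMod N) : eN N (s + t) = eN N s * eN N t := by
  rw [eN_eq_pow, eN_eq_pow, eN_eq_pow, ← pow_add]
  have hmod : (s + t).val = (s.val + t.val) % N := ZMod.val_add s t
  conv_rhs => rw [← Nat.div_add_mod (s.val + t.val) N]
  rw [pow_add, pow_mul, zeta_pow_N, one_pow, one_mul, hmod]

lemma eN_zero : eN N 0 = 1 := by
  simp [eN]

lemma eN_abs (t : ZMod N) : ‖eN N t‖ = 1 := by
  rw [eN, show 2 * Real.pi * Complex.I * (t.val : ℂ) / N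
      = ((2 * Real.pi * t.val / N : ℝ) : ℂ) * Complex.I by push_cast; ring]
  exact Complex.norm_exp_ofReal_mul_I _

lemma eN_conj (t : ZMod N) : (starRingEnd ℂ) (eN N t) = eN N (-t) := by
  have h1 : eN N (-t) * eN N t = 1 := by
    rw [← eN_add]; simp [eN_zero]
  have h2 : (eN N t)⁻¹ = (starRingEnd ℂ) (eN N t) := Complex.inv_eq_conj (eN_abs N t)
  rw [← h2]
  exact (eq_inv_of_mul_eq_one_left h1).symm

lemma eN_ne_one {s : ZMod N} (hs : s ≠ 0) : eN N s ≠ 1 := by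
  intro h
  rw [eN, Complex.exp_eq_one_iff] at h
  obtain ⟨n, hn⟩ := h
  have hNc : (N : ℂ) ≠ 0 := Nat.cast_ne_zero.2 (NeZero.ne N)
  have h2pi : (2 * (Real.pi : ℂ) * Complex.I) ≠ 0 := by
    simp [Real.pi_ne_zero, Complex.I_ne_zero, Complex.ofReal_ne_zero]
  have hn' : (2 * (Real.pi : ℂ) * Complex.I) * (s.val : ℂ)
      = (2 * (Real.pi : ℂ) * Complex.I) * ((n : ℂ) * N) := by
    rw [div_eq_iff hNc] at hn
    linear_combination hn
  have key : (s.val : ℂ) = (n : ℂ) * N := mul_left_cancel₀ h2pi hn'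
  have key' : (s.val : ℤ) = n * N := by exact_mod_cast key
  have hdvd : (N : ℤ) ∣ (s.val : ℤ) := ⟨n, by rw [key']; ring⟩
  have hpos : 0 < (s.val : ℤ) := by
    have := ZMod.val_eq_zero (n := N)
    have : s.val ≠ 0 := fun h0 => hs ((ZMod.val_eq_zero s).1 h0)
    omega
  have hlt : (s.val : ℤ) < N := by exact_mod_cast ZMod.val_lt s
  have := Int.le_of_dvd hpos hdvd
  omega

lemma sum_eN_eq_zero {s : ZMod N} (hs : s ≠ 0) : ∑ n : ZMod N, eN N (s * n) = 0 := by
  have h1 : eN N s * ∑ n : ZMod N, eN N (s * n) = ∑ n : ZMod N, eN N (s * n) := by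
    rw [Finset.mul_sum]
    rw [← Equiv.sum_comp (Equiv.addRight (1 : ZMod N))
      (fun n : ZMod N => eN N (s * n))]
    apply Finset.sum_congr rfl
    intro n _
    rw [← eN_add]
    simp only [Equiv.coe_addRight]
    congr 1
    ring
  by_contra h
  have h2 : eN N s * (∑ n : ZMod N, eN N (s * n)) = 1 * (∑ n : ZMod N, eN N (s * n)) := by
    rw [one_mul]; exact h1
  exact eN_ne_one N hs (mul_right_cancel₀ h h2)

end helpers

lemma gauss_mul_conj (N : ℕ) [NeZero N] (hN : N.Prime) {c : ZMod N} (d : ZMod N)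
    (hc : c ≠ 0) (h2 : (2 : ZMod N) ≠ 0) :
    (∑ n : ZMod N, eN N (c * n ^ 2 + d * n)) *
      (starRingEnd ℂ) (∑ n : ZMod N, eN N (c * n ^ 2 + d * n)) = N := by
  haveI := Fact.mk hN
  rw [map_sum, Finset.sum_mul_sum, Finset.sum_comm]
  have step : ∀ m : ZMod N,
      (∑ n : ZMod N, eN N (c * n ^ 2 + d * n) * (starRingEnd ℂ) (eN N (c * m ^ 2 + d * m)))
      = ∑ h : ZMod N, eN N (c * h ^ 2 + d * h) * eN N ((2 * c * h) * m) := by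
    intro m
    rw [← Equiv.sum_comp (Equiv.addRight m)
      (fun n : ZMod N => eN N (c * n ^ 2 + d * n) * (starRingEnd ℂ) (eN N (c * m ^ 2 + d * m)))]
    apply Finset.sum_congr rfl
    intro h _
    simp only [Equiv.coe_addRight]
    rw [eN_conj, ← eN_add, ← eN_add]
    congr 1
    ring
  calc (∑ m : ZMod N, ∑ n : ZMod N,
          eN N (c * n ^ 2 + d * n) * (starRingEnd ℂ) (eN N (c * m ^ 2 + d * m)))
      = ∑ m : ZMod N, ∑ h : ZMod N, eN N (c * h ^ 2 + d * h) * eN N ((2 * c * h) * m) :=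
        Finset.sum_congr rfl (fun m _ => step m)
    _ = ∑ h : ZMod N, ∑ m : ZMod N, eN N (c * h ^ 2 + d * h) * eN N ((2 * c * h) * m) :=
        Finset.sum_comm
    _ = ∑ h : ZMod N, eN N (c * h ^ 2 + d * h) * ∑ m : ZMod N, eN N ((2 * c * h) * m) := by
        simp [Finset.mul_sum]
    _ = (N : ℂ) := by
        rw [Finset.sum_eq_single (0 : ZMod N)]
        · simp [eN_zero, ZMod.card]
        · intro h _ hh
          rw [sum_eN_eq_zero N (mul_ne_zero (mul_ne_zero h2 hc) hh), mul_zero]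
        · simp

theorem chirp_cross_correlation (N : ℕ) [NeZero N] (hN : N.Prime) (hodd : Odd N)
    (a a' b b' : ZMod N) (haa : a ≠ a') (v : ZMod N × ZMod N) :
    ‖amb N (chirp N a b) (chirp N a' b') v‖ = 1 / Real.sqrt N := by
  haveI := Fact.mk hN
  obtain ⟨τ, ω⟩ := v
  have hNpos : (0 : ℝ) < N := by exact_mod_cast hN.pos
  have hN0 : (N : ℝ) ≠ 0 := ne_of_gt hNpos
  have hNc : (N : ℂ) ≠ 0 := Nat.cast_ne_zero.2 (NeZero.ne N)
  have hsqrt : Real.sqrt N ≠ 0 := by positivity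
  have h2 : (2 : ZMod N) ≠ 0 := by
    have : ((2 : ℕ) : ZMod N) ≠ 0 := by
      rw [Ne, ZMod.natCast_eq_zero_iff]
      intro hdvd
      have hle := Nat.le_of_dvd (by norm_num) hdvd
      have h2le := hN.two_le
      obtain ⟨k, hk⟩ := hodd
      omega
    simpa using this
  set c : ZMod N := 2⁻¹ * (a - a') with hc_def
  set d : ZMod N := ω - 2 * 2⁻¹ * (a * τ) - b + b' with hd_def
  set e : ZMod N := 2⁻¹ * a * τ ^ 2 + b * τ - 2⁻¹ * τ * ω with he_def
  have hc : c ≠ 0 := mul_ne_zero (inv_ne_zero h2) (sub_ne_zero.2 haa)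
  have hss : (Real.sqrt N : ℂ) * (Real.sqrt N : ℂ) = (N : ℂ) := by
    rw [← Complex.ofReal_mul, Real.mul_self_sqrt hNpos.le, Complex.ofReal_natCast]
  have key : (∑ n : ZMod N, eN N (-(2⁻¹ * τ * ω)) * eN N (ω * n) *
        (eN N (2⁻¹ * a * (n - τ) ^ 2 - b * (n - τ)) / (Real.sqrt N : ℂ)) *
        (starRingEnd ℂ) (eN N (2⁻¹ * a' * n ^ 2 - b' * n) / (Real.sqrt N : ℂ)))
      = eN N e / N * ∑ n : ZMod N, eN N (c * n ^ 2 + d * n) := by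
    rw [Finset.mul_sum]
    apply Finset.sum_congr rfl
    intro n _
    rw [map_div₀, eN_conj, Complex.conj_ofReal]
    have hprod : eN N (-(2⁻¹ * τ * ω)) * eN N (ω * n) *
        eN N (2⁻¹ * a * (n - τ) ^ 2 - b * (n - τ)) *
        eN N (-(2⁻¹ * a' * n ^ 2 - b' * n)) = eN N e * eN N (c * n ^ 2 + d * n) := by
      rw [← eN_add, ← eN_add, ← eN_add, ← eN_add]
      congr 1
      ring
    calc eN N (-(2⁻¹ * τ * ω)) * eN N (ω * n) *
          (eN N (2⁻¹ * a * (n - τ) ^ 2 - b * (n - τ)) / (Real.sqrt N : ℂ)) *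
          (eN N (-(2⁻¹ * a' * n ^ 2 - b' * n)) / (Real.sqrt N : ℂ))
        = (eN N (-(2⁻¹ * τ * ω)) * eN N (ω * n) *
            eN N (2⁻¹ * a * (n - τ) ^ 2 - b * (n - τ)) *
            eN N (-(2⁻¹ * a' * n ^ 2 - b' * n))) /
            ((Real.sqrt N : ℂ) * (Real.sqrt N : ℂ)) := by ring
      _ = eN N e * eN N (c * n ^ 2 + d * n) / N := by rw [hprod, hss]
      _ = eN N e / N * eN N (c * n ^ 2 + d * n) := by ring
  have hamb : amb N (chirp N a b) (chirp N a' b') (τ, ω)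
      = eN N e / N * ∑ n : ZMod N, eN N (c * n ^ 2 + d * n) := by
    simp only [amb, inn, heis, chirp]
    exact key
  rw [hamb, norm_mul, norm_div, eN_abs, Complex.norm_natCast]
  have hS : ‖∑ n : ZMod N, eN N (c * n ^ 2 + d * n)‖ = Real.sqrt N := by
    rw [Complex.norm_def]
    congr 1
    have hg := gauss_mul_conj N hN d hc h2
    rw [Complex.mul_conj] at hg
    exact_mod_cast hg
  rw [hS, div_mul_eq_mul_div, one_mul, div_eq_div_iff hN0 hsqrt, one_mul,
    Real.mul_self_sqrt hNpos.le]
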